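/- Let h > 0 be a real number, N ≥ 1 a natural number, and t ≥ 3 a real number. Let u : ℕ → ℝ satisfy u_k ≥ 0 and u_k ≤ u_{k+1} for all k. If for every k with 0 ≤ k ≤ N−1 one has u_k^{t−2}·(u_{k+1} − u_k)/h ≥ (t−2)·u_{k+2}^{t−2}·((k+2)·h)^{t−3}, then h·Σ_{k=0}^{N−1} u_k^t − (h·Σ_{k=0}^{N−1} u_k)^{t−1} ≥ u_0^{t−2}·(u_0 − (t−1)·h^{t−2}) · h·Σ_{k=0}^{N−1} u_k. -/

import Mathlib

open Real Finset

lemma bern_lower' {a b p : ℝ} (ha : 0 ≤ a) (hab : a ≤ b) (hp : 1 ≤ p) :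
    p * a ^ (p - 1) * (b - a) ≤ b ^ p - a ^ p := by
  rcases eq_or_lt_of_le ha with rfl | ha'
  · rcases eq_or_lt_of_le hp with rfl | hp'
    · simp
    · rw [Real.zero_rpow (ne_of_gt (by linarith)), Real.zero_rpow (ne_of_gt (by linarith))]
      simp only [mul_zero, zero_mul, sub_zero]
      positivity
  · have hb : 0 < b := lt_of_lt_of_le ha' hab
    have hs : (0:ℝ) ≤ (b - a) / a := div_nonneg (by linarith) ha'.le
    have hber := one_add_mul_self_le_rpow_one_add (s := (b - a)/a) (by linarith) hp
    have h1 : 1 + (b - a)/a = b / a := by field_simp; ring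
    rw [h1, Real.div_rpow hb.le ha] at hber
    have hap : (0:ℝ) < a ^ p := Real.rpow_pos_of_pos ha' p
    have h3 : a ^ p = a ^ (p - 1) * a := by
      rw [← Real.rpow_add_one (ne_of_gt ha')]; ring_nf
    have h4 := mul_le_mul_of_nonneg_right hber hap.le
    rw [div_mul_cancel₀ _ (ne_of_gt hap)] at h4
    calc p * a ^ (p-1) * (b - a) = (1 + p * ((b-a)/a)) * a ^ p - a ^ p := by
          rw [h3]; field_simp; ring
      _ ≤ b ^ p - a ^ p := by linarith

lemma bern_upper' {a b p : ℝ} (ha : 0 ≤ a) (hab : a ≤ b) (hp : 1 ≤ p) :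
    b ^ p - a ^ p ≤ p * b ^ (p - 1) * (b - a) := by
  rcases eq_or_lt_of_le (ha.trans hab) with hb | hb
  · have ha0 : a = 0 := le_antisymm (hab.trans hb.symm.le) ha
    subst ha0; rw [← hb]; simp
  · have hs : -1 ≤ (a - b) / b := by
      rw [neg_le, ← neg_div, neg_sub, div_le_one hb]; linarith
    have hber := one_add_mul_self_le_rpow_one_add hs hp
    have h1 : 1 + (a - b)/b = a / b := by field_simp; ring
    rw [h1, Real.div_rpow ha hb.le] at hber
    have hbp : (0:ℝ) < b ^ p := Real.rpow_pos_of_pos hb p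
    have h3 : b ^ p = b ^ (p - 1) * b := by
      rw [← Real.rpow_add_one (ne_of_gt hb)]; ring_nf
    have h4 := mul_le_mul_of_nonneg_right hber hbp.le
    rw [div_mul_cancel₀ _ (ne_of_gt hbp)] at h4
    calc b ^ p - a ^ p ≤ b ^ p - (1 + p * ((a-b)/b)) * b ^ p := by linarith
      _ = p * b ^ (p-1) * (b - a) := by rw [h3]; field_simp; ring

lemma rpow_sub_one_mul' {x p : ℝ} (hx : 0 ≤ x) (hp : 0 < p) :
    x ^ (p - 1) * x = x ^ p := by
  rcases eq_or_lt_of_le hx with rfl | hx'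
  · rw [Real.zero_rpow (ne_of_gt hp), mul_zero]
  · rw [← Real.rpow_add_one (ne_of_gt hx')]; ring_nf

theorem qi_time_scale_hZ_thm31
    (h : ℝ) (hh : 0 < h) (N : ℕ) (hN : 1 ≤ N) (t : ℝ) (ht : 3 ≤ t)
    (u : ℕ → ℝ)
    (hnonneg : ∀ k, 0 ≤ u k)
    (hmono : ∀ k, u k ≤ u (k + 1))
    (hyp : ∀ k, k ≤ N - 1 →
      (t - 2) * u (k + 2) ^ (t - 2) * (((k : ℝ) + 2) * h) ^ (t - 3) ≤
        u k ^ (t - 2) * (u (k + 1) - u k) / h) :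
    h * ∑ k ∈ Finset.range N, u k ^ t -
        (h * ∑ k ∈ Finset.range N, u k) ^ (t - 1) ≥
      u 0 ^ (t - 2) * (u 0 - (t - 1) * h ^ (t - 2)) *
        (h * ∑ k ∈ Finset.range N, u k) := by
  have humono : Monotone u := monotone_nat_of_le_succ hmono
  set S : ℕ → ℝ := fun m => h * ∑ k ∈ Finset.range m, u k with hS
  have hSnn : ∀ m, 0 ≤ S m := fun m =>
    mul_nonneg hh.le (Finset.sum_nonneg fun k _ => hnonneg k)
  have hSsucc : ∀ m, S (m + 1) = S m + h * u m := by
    intro m; simp [hS, Finset.sum_range_succ, mul_add]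
  have hSmono : ∀ m, S m ≤ S (m + 1) := by
    intro m; rw [hSsucc]; nlinarith [hnonneg m, hh.le]
  have hSbound : ∀ m, S m ≤ (m : ℝ) * h * u m := by
    intro m
    have : ∑ k ∈ Finset.range m, u k ≤ ∑ k ∈ Finset.range m, u m :=
      Finset.sum_le_sum fun k hk => humono (Finset.mem_range.mp hk).le
    have h2 : ∑ k ∈ Finset.range m, u m = (m:ℝ) * u m := by
      rw [Finset.sum_const, Finset.card_range, nsmul_eq_mul]
    calc S m ≤ h * ((m:ℝ) * u m) := by
          rw [hS]; dsimp only; rw [← h2]; exact mul_le_mul_of_nonneg_left this hh.le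
      _ = (m:ℝ) * h * u m := by ring
  -- key telescoped inequality
  have key : ∀ m, m ≤ N →
      u 0 ^ (t-1) + (t-1) * (S (m+1)) ^ (t-2) ≤ u m ^ (t-1) + (t-1) * (h * u 0) ^ (t-2) := by
    intro m
    induction m with
    | zero =>
      intro _
      have : S 1 = h * u 0 := by simp [hS]
      rw [this]
    | succ m ih =>
      intro hmN
      have ihm := ih (le_of_lt (Nat.lt_of_succ_le hmN))
      have hhyp := hyp m (by omega)
      -- step for S
      have hstep : (t-1) * (S (m+2) ^ (t-2) - S (m+1) ^ (t-2)) ≤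
          u (m+1) ^ (t-1) - u m ^ (t-1) := by
        have hB := bern_upper' (hSnn (m+1)) (hSmono (m+1)) (by linarith : (1:ℝ) ≤ t - 2)
        have hAe : t - 2 - 1 = t - 3 := by ring
        rw [hAe] at hB
        have hSd : S (m + 1 + 1) - S (m+1) = h * u (m+1) := by rw [hSsucc]; ring
        rw [hSd] at hB
        -- bound S(m+2)^{t-3} * u(m+1) ≤ ((m+2)h)^{t-3} * u(m+2)^{t-2}
        have hb1 : S (m+2) ^ (t-3) ≤ (((m:ℝ)+2) * h) ^ (t-3) * u (m+2) ^ (t-3) := by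
          have h1 : S (m+2) ≤ ((m:ℝ)+2) * h * u (m+2) := by
            have := hSbound (m+2)
            push_cast at this
            convert this using 3
          calc S (m+2) ^ (t-3) ≤ (((m:ℝ)+2) * h * u (m+2)) ^ (t-3) :=
                Real.rpow_le_rpow (hSnn _) h1 (by linarith)
            _ = (((m:ℝ)+2) * h) ^ (t-3) * u (m+2) ^ (t-3) :=
                Real.mul_rpow (by positivity) (hnonneg _)
        have hb2 : u (m+2) ^ (t-3) * u (m+1) ≤ u (m+2) ^ (t-2) := by
          rcases eq_or_lt_of_le (hnonneg (m+2)) with hz | hz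
          · have hmm := hmono (m+1)
            rw [← hz] at hmm
            have hz1 : u (m+1) = 0 := le_antisymm hmm (hnonneg _)
            rw [hz1, mul_zero]
            exact Real.rpow_nonneg (hnonneg _) _
          · have : u (m+2) ^ (t-3) * u (m+1) ≤ u (m+2) ^ (t-3) * u (m+2) :=
              mul_le_mul_of_nonneg_left (hmono (m+1)) (Real.rpow_nonneg hz.le _)
            calc u (m+2) ^ (t-3) * u (m+1) ≤ u (m+2) ^ (t-3) * u (m+2) := this
              _ = u (m+2) ^ (t-2) := by
                  have := rpow_sub_one_mul' (x := u (m+2)) (p := t-2) hz.le (by linarith)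
                  rw [show t - 2 - 1 = t - 3 by ring] at this
                  exact this
        -- chain
        have hA : S (m+1+1) ^ (t-2) - S (m+1) ^ (t-2) ≤
            (t-2) * u (m+2) ^ (t-2) * (((m:ℝ)+2) * h) ^ (t-3) * h := by
          calc S (m+1+1) ^ (t-2) - S (m+1) ^ (t-2)
              ≤ (t-2) * S (m+1+1) ^ (t-3) * (h * u (m+1)) := hB
            _ ≤ (t-2) * ((((m:ℝ)+2) * h) ^ (t-3) * u (m+2) ^ (t-3)) * (h * u (m+1)) := by
                have hnn : (0:ℝ) ≤ (t-2) * (h * u (m+1)) :=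
                  mul_nonneg (by linarith) (mul_nonneg hh.le (hnonneg _))
                have h5 := mul_le_mul_of_nonneg_left hb1 hnn
                show (t-2) * S (m+2) ^ (t-3) * (h * u (m+1)) ≤ _
                linarith [h5]
            _ ≤ (t-2) * u (m+2) ^ (t-2) * (((m:ℝ)+2) * h) ^ (t-3) * h := by
                have hc : (0:ℝ) ≤ (((m:ℝ)+2) * h) ^ (t-3) := Real.rpow_nonneg (by positivity) _
                have hnn : (0:ℝ) ≤ (t-2) * ((((m:ℝ)+2) * h) ^ (t-3)) * h :=
                  mul_nonneg (mul_nonneg (by linarith) hc) hh.le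
                have h5 := mul_le_mul_of_nonneg_left hb2 hnn
                linarith [h5]
        have hL := bern_lower' (hnonneg m) (hmono m) (by linarith : (1:ℝ) ≤ t - 1)
        rw [show t - 1 - 1 = t - 2 by ring] at hL
        have hhyp' : (t-2) * u (m+2) ^ (t-2) * (((m:ℝ)+2) * h) ^ (t-3) * h ≤
            u m ^ (t-2) * (u (m+1) - u m) := by
          have := mul_le_mul_of_nonneg_right hhyp hh.le
          rwa [div_mul_cancel₀ _ (ne_of_gt hh)] at this
        have h2 : S (m+2) = S (m+1+1) := rfl
        nlinarith [hA, hhyp', hL]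
      have : S (m+1+1) = S (m+2) := rfl
      nlinarith [hstep, ihm]
  -- main induction
  have main : ∀ m, 1 ≤ m → m ≤ N →
      u 0 ^ (t-2) * (u 0 - (t-1) * h ^ (t-2)) * S m ≤
        h * ∑ k ∈ Finset.range m, u k ^ t - S m ^ (t-1) := by
    intro m h1m
    induction m with
    | zero => omega
    | succ m ih =>
      intro hmN
      rcases Nat.eq_or_lt_of_le h1m with hm1 | hm1
      · -- base case m+1 = 1
        have hm0 : m = 0 := by omega
        subst hm0
        have hS1 : S 1 = h * u 0 := by simp [hS]
        have hsum1 : ∑ k ∈ Finset.range 1, u k ^ t = u 0 ^ t := by simp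
        rw [hS1, hsum1]
        have e1 : (h * u 0) ^ (t-1) = h ^ (t-1) * u 0 ^ (t-1) :=
          Real.mul_rpow hh.le (hnonneg 0)
        have e2 : u 0 ^ (t-2) * u 0 = u 0 ^ (t-1) := by
          have := rpow_sub_one_mul' (x := u 0) (p := t-1) (hnonneg 0) (by linarith)
          rwa [show t - 1 - 1 = t - 2 by ring] at this
        have e3 : u 0 ^ (t-1) * u 0 = u 0 ^ t := by
          have := rpow_sub_one_mul' (x := u 0) (p := t) (hnonneg 0) (by linarith)
          rwa [show t - 1 = t - 1 by ring] at this
        have e4 : h ^ (t-2) * h = h ^ (t-1) := by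
          have := rpow_sub_one_mul' (x := h) (p := t-1) hh.le (by linarith)
          rwa [show t - 1 - 1 = t - 2 by ring] at this
        have hnn : 0 ≤ h ^ (t-1) * u 0 ^ (t-1) :=
          mul_nonneg (Real.rpow_nonneg hh.le _) (Real.rpow_nonneg (hnonneg 0) _)
        have hid : u 0 ^ (t-2) * (u 0 - (t-1) * h ^ (t-2)) * (h * u 0)
            = h * u 0 ^ t - (t-1) * (h ^ (t-1) * u 0 ^ (t-1)) := by
          linear_combination (h * u 0 - (t-1) * h ^ (t-2) * h) * e2 + h * e3
            - (t-1) * u 0 ^ (t-1) * e4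
        rw [e1, hid]
        nlinarith [hnn]
      · -- inductive step, m ≥ 1
        have ihm := ih (by omega) (by omega)
        have hkey := key m (by omega)
        have hB := bern_upper' (hSnn m) (hSmono m) (by linarith : (1:ℝ) ≤ t - 1)
        rw [show t - 1 - 1 = t - 2 by ring] at hB
        have hSd : S (m+1) - S m = h * u m := by rw [hSsucc]; ring
        rw [hSd] at hB
        have hsum : ∑ k ∈ Finset.range (m+1), u k ^ t
            = (∑ k ∈ Finset.range m, u k ^ t) + u m ^ t := Finset.sum_range_succ _ _
        have e2 : u m ^ (t-1) * u m = u m ^ t := by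
          have := rpow_sub_one_mul' (x := u m) (p := t) (hnonneg m) (by linarith)
          rwa [show t - 1 = t - 1 by ring] at this
        have e3 : u 0 ^ (t-2) * h ^ (t-2) = (h * u 0) ^ (t-2) := by
          rw [Real.mul_rpow hh.le (hnonneg 0)]; ring
        have e4 : u 0 ^ (t-2) * u 0 = u 0 ^ (t-1) := by
          have := rpow_sub_one_mul' (x := u 0) (p := t-1) (hnonneg 0) (by linarith)
          rwa [show t - 1 - 1 = t - 2 by ring] at this
        rw [hsum]
        have hum : 0 ≤ h * u m := mul_nonneg hh.le (hnonneg m)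
        -- key consequence multiplied by h * u m
        have hk2 : (u 0 ^ (t-1) - (t-1) * (h * u 0) ^ (t-2)) * (h * u m) ≤
            (u m ^ (t-1) - (t-1) * S (m+1) ^ (t-2)) * (h * u m) := by
          apply mul_le_mul_of_nonneg_right _ hum
          linarith [hkey]
        have hSm1 : S (m+1) = S m + h * u m := hSsucc m
        have hC : u 0 ^ (t-2) * (u 0 - (t-1) * h ^ (t-2))
            = u 0 ^ (t-1) - (t-1) * (h * u 0) ^ (t-2) := by
          linear_combination e4 - (t-1) * e3
        have hchain : u 0 ^ (t-2) * (u 0 - (t-1) * h ^ (t-2)) * (h * u m)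
            ≤ h * u m ^ t - S (m+1) ^ (t-1) + S m ^ (t-1) := by
          calc u 0 ^ (t-2) * (u 0 - (t-1) * h ^ (t-2)) * (h * u m)
              = (u 0 ^ (t-1) - (t-1) * (h * u 0) ^ (t-2)) * (h * u m) := by rw [hC]
            _ ≤ (u m ^ (t-1) - (t-1) * S (m+1) ^ (t-2)) * (h * u m) := hk2
            _ = h * u m ^ t - (t-1) * S (m+1) ^ (t-2) * (h * u m) := by
                linear_combination h * e2
            _ ≤ h * u m ^ t - S (m+1) ^ (t-1) + S m ^ (t-1) := by linarith [hB]
        calc u 0 ^ (t-2) * (u 0 - (t-1) * h ^ (t-2)) * S (m+1)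
            = u 0 ^ (t-2) * (u 0 - (t-1) * h ^ (t-2)) * S m
              + u 0 ^ (t-2) * (u 0 - (t-1) * h ^ (t-2)) * (h * u m) := by
              rw [hSm1]; ring
          _ ≤ (h * ∑ k ∈ Finset.range m, u k ^ t - S m ^ (t-1))
              + (h * u m ^ t - S (m+1) ^ (t-1) + S m ^ (t-1)) := add_le_add ihm hchain
          _ = h * (∑ k ∈ Finset.range m, u k ^ t + u m ^ t) - S (m+1) ^ (t-1) := by ring
  have hmain := main N hN (le_refl N)
  simp only [hS] at hmain
  rw [ge_iff_le]
  linarith [hmain]
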